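/- Let (W₁, W₂) be a pair of independent standard Brownian motions and fix α ∈ (1,2). For δ > 0 set v = 2δ^{−α}; for a solution (Q₁,Q₂) of the two-armed Thompson sampling limit ODE with arm gap δ define g₁(t) = √(Q₁(t)/t) and τ*_δ = inf{t ∈ [0,1] : Q₂(t) ≥ δ^{−α}} (with τ*_δ = 1 if no such t exists). Then almost surely there exist a constant C > 0 and a threshold δ₀ such that for every δ ≥ δ₀ and every solution (Q₁,Q₂) driven by (W₁(ω), W₂(ω)) with arm gap δ satisfying Q₁(v) ≥ δ^{−α}, one has for all t ∈ [τ*_δ, 1): Q₂'(t) ≤ Φ( −g₁(t)·√(Q₂(t))·δ + C·√(log log δ) ). -/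

import Mathlib

open MeasureTheory ProbabilityTheory Filter Set

/-- The standard normal distribution function `Φ`. -/
noncomputable def Phi (x : ℝ) : ℝ :=
  ∫ s in Set.Iic x, (Real.sqrt (2 * Real.pi))⁻¹ * Real.exp (-s ^ 2 / 2)

/-- `W` is a standard Brownian motion under `P`: continuous sample paths, `W₀ = 0`,
Gaussian increments `W_t - W_s ~ N(0, t - s)`, and independent increments. -/
def IsStdBM {Ω : Type*} [MeasurableSpace Ω] (P : Measure Ω) (W : ℝ → Ω → ℝ) : Prop :=
  (∀ ω, Continuous fun t => W t ω) ∧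
  (∀ ω, W 0 ω = 0) ∧
  (∀ s t : ℝ, 0 ≤ s → s < t →
    Measure.map (fun ω => W t ω - W s ω) P = gaussianReal 0 (Real.toNNReal (t - s))) ∧
  (∀ (n : ℕ) (t : Fin (n + 1) → ℝ), (∀ i, 0 ≤ t i) → StrictMono t →
    iIndepFun
      (fun i : Fin n => fun ω => W (t i.succ) ω - W (t i.castSucc) ω) P)

/-- `W₁, W₂` are independent standard Brownian motions under `P`. -/
def IndepBMs {Ω : Type*} [MeasurableSpace Ω] (P : Measure Ω) (W₁ W₂ : ℝ → Ω → ℝ) : Prop :=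
  IsStdBM P W₁ ∧ IsStdBM P W₂ ∧
  IndepFun (fun ω => fun t => W₁ t ω) (fun ω => fun t => W₂ t ω) P

/-- A solution of the two-armed Thompson sampling limit ODE driven by `(w₁, w₂)`
with arm gap `δ`, unit variance and no smoothing. -/
def IsTwoArmSol (w₁ w₂ : ℝ → ℝ) (δ : ℝ) (Q₁ Q₂ : ℝ → ℝ) : Prop :=
  ContinuousOn Q₁ (Set.Icc 0 1) ∧ ContinuousOn Q₂ (Set.Icc 0 1) ∧
  MonotoneOn Q₁ (Set.Icc 0 1) ∧ MonotoneOn Q₂ (Set.Icc 0 1) ∧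
  Q₁ 0 = 0 ∧ Q₂ 0 = 0 ∧ (∀ t ∈ Set.Icc (0:ℝ) 1, Q₁ t + Q₂ t = t) ∧
  (∀ t ∈ Set.Ioc (0:ℝ) 1, 0 < Q₁ t) ∧ (∀ t ∈ Set.Ioc (0:ℝ) 1, 0 < Q₂ t) ∧
  (∀ t ∈ Set.Ioc (0:ℝ) 1,
    HasDerivWithinAt Q₁
      (Phi ((δ * Q₁ t * Q₂ t + Q₂ t * w₁ (Q₁ t) - Q₁ t * w₂ (Q₂ t)) /
        Real.sqrt (t * Q₁ t * Q₂ t))) (Set.Icc 0 1) t)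

open Real NNReal ENNReal

lemma TSB_gauss_integrable :
    Integrable (fun s : ℝ => (Real.sqrt (2 * Real.pi))⁻¹ * Real.exp (-s ^ 2 / 2)) := by
  have h : Integrable (fun s : ℝ => Real.exp (-(2⁻¹ : ℝ) * s ^ 2)) :=
    integrable_exp_neg_mul_sq (by norm_num)
  have := h.const_mul ((Real.sqrt (2 * Real.pi))⁻¹)
  refine this.congr (ae_of_all _ fun s => ?_)
  ring_nf

lemma TSB_Phi_nonneg (x : ℝ) : 0 ≤ Phi x := by
  apply integral_nonneg
  intro s
  positivity

lemma TSB_Phi_mono : Monotone Phi := by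
  intro x y hxy
  apply setIntegral_mono_set TSB_gauss_integrable.integrableOn
  · exact ae_of_all _ fun s => by positivity
  · exact ae_of_all _ (Iic_subset_Iic.2 hxy)

lemma TSB_Phi_add_neg (x : ℝ) : Phi x + Phi (-x) = 1 := by
  have heven : ∀ s : ℝ, (Real.sqrt (2 * Real.pi))⁻¹ * Real.exp (-(-s) ^ 2 / 2)
      = (Real.sqrt (2 * Real.pi))⁻¹ * Real.exp (-s ^ 2 / 2) := by
    intro s; rw [neg_sq]
  have h1 : Phi (-x) = ∫ s in Ioi x, (Real.sqrt (2 * Real.pi))⁻¹ * Real.exp (-s ^ 2 / 2) := by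
    rw [Phi, ← neg_neg x, ← integral_comp_neg_Iic]
    simp_rw [heven]
    rw [neg_neg]
  have h2 : Phi x + Phi (-x)
      = ∫ s : ℝ, (Real.sqrt (2 * Real.pi))⁻¹ * Real.exp (-s ^ 2 / 2) := by
    rw [h1, Phi, ← compl_Iic, integral_add_compl measurableSet_Iic TSB_gauss_integrable]
  have : ∀ s : ℝ, -s ^ 2 / 2 = -(2⁻¹ : ℝ) * s ^ 2 := fun s => by ring
  simp_rw [h2, integral_const_mul, this, integral_gaussian]
  rw [show Real.pi / 2⁻¹ = 2 * Real.pi by ring, inv_mul_cancel₀]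
  positivity

lemma TSB_int_exp (c a : ℝ) (hc : 0 < c) :
    ∫ x in Ioi a, Real.exp (-(c * x)) = c⁻¹ * Real.exp (-(c * a)) := by
  have h := integral_comp_mul_left_Ioi (fun x => Real.exp (-x)) a hc
  simp only [smul_eq_mul] at h
  rw [h, integral_exp_neg_Ioi]

lemma TSB_Ici_tail {v : ℝ≥0} (hv : v ≠ 0) {a : ℝ} (ha : 0 < a) (hva : Real.sqrt v ≤ a) :
    ∫ x in Ici a, gaussianPDFReal 0 v x ≤ Real.exp (-a ^ 2 / (2 * v)) := by
  have hv0 : (0 : ℝ) < v := by exact_mod_cast pos_iff_ne_zero.mpr hv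
  have hc : 0 < a / v := div_pos ha hv0
  set A : ℝ := (Real.sqrt (2 * Real.pi * v))⁻¹ * Real.exp (a ^ 2 / (2 * v)) with hAdef
  have hA : 0 ≤ A := by positivity
  have hgle : ∀ x ∈ Ici a, gaussianPDFReal 0 v x ≤ A * Real.exp (-(a / v * x)) := by
    intro x _
    have key : Real.exp (-(x - 0) ^ 2 / (2 * v)) ≤
        Real.exp (a ^ 2 / (2 * v)) * Real.exp (-(a / v * x)) := by
      rw [← Real.exp_add]
      refine Real.exp_le_exp.2 ?_
      have hid : a ^ 2 / (2 * (v:ℝ)) + -(a / v * x) - (-(x - 0) ^ 2 / (2 * v))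
          = (x - a) ^ 2 / (2 * v) := by field_simp; ring
      have hnn : (0:ℝ) ≤ (x - a) ^ 2 / (2 * v) := by positivity
      linarith
    rw [gaussianPDFReal]
    refine le_trans (mul_le_mul_of_nonneg_left key (by positivity :
      (0:ℝ) ≤ (Real.sqrt (2 * Real.pi * v))⁻¹)) (le_of_eq ?_)
    rw [hAdef]; ring
  have hint2 : IntegrableOn (fun x => A * Real.exp (-(a / v * x))) (Ici a) := by
    rw [integrableOn_Ici_iff_integrableOn_Ioi]
    have h := (exp_neg_integrableOn_Ioi a hc).const_mul A
    simp only [neg_mul] at h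
    exact h
  have h1 : ∫ x in Ici a, gaussianPDFReal 0 v x ≤ ∫ x in Ici a, A * Real.exp (-(a / v * x)) :=
    setIntegral_mono_on (integrable_gaussianPDFReal 0 v).integrableOn hint2 measurableSet_Ici hgle
  have h2 : ∫ x in Ici a, A * Real.exp (-(a / v * x))
      = A * ((a / v)⁻¹ * Real.exp (-(a / v * a))) := by
    rw [integral_Ici_eq_integral_Ioi, integral_const_mul, TSB_int_exp _ a hc]
  have hca : Real.exp (a ^ 2 / (2 * v)) * Real.exp (-(a / v * a)) = Real.exp (-a ^ 2 / (2 * v)) := by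
    rw [← Real.exp_add]
    congr 1
    field_simp
    ring
  have hpre : (Real.sqrt (2 * Real.pi * v))⁻¹ * (a / v)⁻¹ ≤ 1 := by
    have hcinv : (a / v)⁻¹ = (v : ℝ) / a := inv_div _ _
    have h3 : (v : ℝ) / a ≤ Real.sqrt v := by
      rw [div_le_iff₀ ha]
      calc (v : ℝ) = Real.sqrt v * Real.sqrt v := (Real.mul_self_sqrt hv0.le).symm
      _ ≤ Real.sqrt v * a := mul_le_mul_of_nonneg_left hva (Real.sqrt_nonneg _)
    have h4 : Real.sqrt (v : ℝ) ≤ Real.sqrt (2 * Real.pi * v) := by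
      apply Real.sqrt_le_sqrt
      nlinarith [Real.pi_gt_three, hv0]
    rw [hcinv, inv_mul_le_iff₀ (by positivity), mul_one]
    exact h3.trans h4
  refine (h1.trans_eq h2).trans ?_
  calc A * ((a / v)⁻¹ * Real.exp (-(a / v * a)))
      = ((Real.sqrt (2 * Real.pi * v))⁻¹ * (a / v)⁻¹)
        * (Real.exp (a ^ 2 / (2 * v)) * Real.exp (-(a / v * a))) := by rw [hAdef]; ring
    _ ≤ 1 * (Real.exp (a ^ 2 / (2 * v)) * Real.exp (-(a / v * a))) :=
        mul_le_mul_of_nonneg_right hpre (by positivity)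
    _ = Real.exp (-a ^ 2 / (2 * v)) := by rw [one_mul, hca]

lemma TSB_gauss_tail {v : ℝ≥0} (hv : v ≠ 0) {a : ℝ} (ha : 0 < a) (hva : Real.sqrt v ≤ a) :
    gaussianReal 0 v {x | a ≤ |x|} ≤ ENNReal.ofReal (2 * Real.exp (-a ^ 2 / (2 * v))) := by
  have hset : {x : ℝ | a ≤ |x|} = Iic (-a) ∪ Ici a := by
    ext x
    simp only [mem_setOf_eq, mem_union, mem_Iic, mem_Ici, le_abs, le_neg]
    tauto
  rw [hset, gaussianReal_apply_eq_integral 0 hv]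
  apply ENNReal.ofReal_le_ofReal
  have hdisj : Disjoint (Iic (-a)) (Ici a) := by
    rw [Iic_disjoint_Ici]
    linarith
  rw [setIntegral_union hdisj measurableSet_Ici
    (integrable_gaussianPDFReal 0 v).integrableOn (integrable_gaussianPDFReal 0 v).integrableOn]
  have hneg : ∫ x in Iic (-a), gaussianPDFReal 0 v x = ∫ x in Ioi a, gaussianPDFReal 0 v x := by
    have heven : ∀ y : ℝ, gaussianPDFReal 0 v (-y) = gaussianPDFReal 0 v y := by
      intro y
      rw [gaussianPDFReal, gaussianPDFReal]
      norm_num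
    rw [← neg_neg a, ← integral_comp_neg_Iic]
    simp_rw [heven]
    rw [neg_neg]
  have hIoi : ∫ x in Ioi a, gaussianPDFReal 0 v x ≤ Real.exp (-a ^ 2 / (2 * v)) := by
    rw [← integral_Ici_eq_integral_Ioi]
    exact TSB_Ici_tail hv ha hva
  have hIci := TSB_Ici_tail hv ha hva
  rw [hneg]
  linarith

/-- dyadic length -/
noncomputable def TSB_e (m : ℕ) : ℝ := (2:ℝ)⁻¹ ^ m

lemma TSB_e_pos (m : ℕ) : 0 < TSB_e m := by unfold TSB_e; positivity

lemma TSB_e_add (k j : ℕ) : TSB_e (k + j) = TSB_e k * TSB_e j := pow_add _ _ _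

lemma TSB_e_succ (m : ℕ) : TSB_e (m + 1) * 2 = TSB_e m := by
  rw [TSB_e, TSB_e, pow_succ]
  ring

lemma TSB_e_le_one (m : ℕ) : TSB_e m ≤ 1 :=
  pow_le_one₀ (by norm_num) (by norm_num)

/-- chaining thresholds -/
noncomputable def TSB_a (k j : ℕ) : ℝ :=
  Real.sqrt (TSB_e (k + j)) * (2 * Real.sqrt (j + 1) + 2 * Real.sqrt (Real.log (k + 2)))

lemma TSB_log_two_pos : (0:ℝ) < Real.log 2 := Real.log_pos (by norm_num)

lemma TSB_log_k2_pos (k : ℕ) : (0:ℝ) < Real.log (k + 2) := by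
  apply Real.log_pos
  have h0 : (0:ℝ) ≤ (k:ℝ) := Nat.cast_nonneg k
  linarith

lemma TSB_a_pos (k j : ℕ) : 0 < TSB_a k j := by
  apply mul_pos (Real.sqrt_pos.2 (TSB_e_pos _))
  have h0 : (0:ℝ) ≤ (j:ℝ) := Nat.cast_nonneg j
  have h1 : (0:ℝ) < Real.sqrt (j + 1) := Real.sqrt_pos.2 (by linarith)
  have h2 : (0:ℝ) ≤ Real.sqrt (Real.log (k + 2)) := Real.sqrt_nonneg _
  linarith

lemma TSB_sqrt_le_a (k j : ℕ) : Real.sqrt (TSB_e (k + j)) ≤ TSB_a k j := by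
  rw [TSB_a]
  have h0 : (0:ℝ) ≤ (j:ℝ) := Nat.cast_nonneg j
  have h1 : (1:ℝ) ≤ Real.sqrt (j + 1) := by
    calc (1:ℝ) = Real.sqrt 1 := Real.sqrt_one.symm
      _ ≤ Real.sqrt (j + 1) := Real.sqrt_le_sqrt (by linarith)
  have h2 : (0:ℝ) ≤ Real.sqrt (Real.log (k + 2)) := Real.sqrt_nonneg _
  nlinarith [Real.sqrt_nonneg (TSB_e (k + j))]

section Prob
variable {Ω : Type*} [MeasurableSpace Ω] (P : Measure Ω) (W : ℝ → Ω → ℝ)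

lemma TSB_inc_tail
    (hmap : ∀ s t : ℝ, 0 ≤ s → s < t →
      Measure.map (fun ω => W t ω - W s ω) P = gaussianReal 0 (Real.toNNReal (t - s)))
    {s t a : ℝ} (hs : 0 ≤ s) (hst : s < t) (ha : 0 < a) (hva : Real.sqrt (t - s) ≤ a) :
    P {ω | a ≤ |W t ω - W s ω|} ≤ ENNReal.ofReal (2 * Real.exp (-a ^ 2 / (2 * (t - s)))) := by
  have hm := hmap s t hs hst
  have hts : 0 < t - s := by linarith
  have hX : AEMeasurable (fun ω => W t ω - W s ω) P := by
    by_contra h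
    rw [Measure.map_of_not_aemeasurable h] at hm
    have := congrArg (fun μ : Measure ℝ => μ univ) hm
    simp [measure_univ] at this
  have hms : MeasurableSet {x : ℝ | a ≤ |x|} := by
    have : {x : ℝ | a ≤ |x|} = abs ⁻¹' Ici a := rfl
    rw [this]
    exact measurable_abs measurableSet_Ici
  have happ : P {ω | a ≤ |W t ω - W s ω|}
      = (Measure.map (fun ω => W t ω - W s ω) P) {x | a ≤ |x|} :=
    (Measure.map_apply_of_aemeasurable hX hms).symm
  rw [happ, hm]
  have hv : Real.toNNReal (t - s) ≠ 0 := by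
    simp only [ne_eq, Real.toNNReal_eq_zero, not_le]
    linarith
  have hcoe : ((Real.toNNReal (t - s)) : ℝ) = t - s := Real.coe_toNNReal _ hts.le
  have := TSB_gauss_tail hv ha (by rw [hcoe]; exact hva)
  rw [hcoe] at this
  exact this

/-- good event at scale `k` -/
def TSB_E (W : ℝ → Ω → ℝ) (k : ℕ) : Set Ω :=
  {ω | ∀ j i : ℕ, i < 2 ^ j →
    |W ((i + 1) * TSB_e (k + j)) ω - W (i * TSB_e (k + j)) ω| ≤ TSB_a k j}

lemma TSB_E_compl_le
    (hmap : ∀ s t : ℝ, 0 ≤ s → s < t →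
      Measure.map (fun ω => W t ω - W s ω) P = gaussianReal 0 (Real.toNNReal (t - s)))
    (k : ℕ) :
    P (TSB_E W k)ᶜ ≤ ENNReal.ofReal ((((k:ℝ) + 2) ^ 2)⁻¹) := by
  classical
  have hsub : (TSB_E W k)ᶜ ⊆
      ⋃ j : ℕ, ⋃ i ∈ Finset.range (2 ^ j),
        {ω | TSB_a k j ≤ |W ((i + 1) * TSB_e (k + j)) ω - W (i * TSB_e (k + j)) ω|} := by
    intro ω hω
    simp only [TSB_E, mem_compl_iff, mem_setOf_eq, not_forall] at hω
    obtain ⟨j, i, hij, hgt⟩ := hω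
    refine mem_iUnion.2 ⟨j, mem_iUnion₂.2 ⟨i, Finset.mem_range.2 hij, ?_⟩⟩
    exact le_of_lt (lt_of_not_ge hgt)
  refine (measure_mono hsub).trans ?_
  refine (measure_iUnion_le _).trans ?_
  have hsingle : ∀ j i : ℕ,
      P {ω | TSB_a k j ≤ |W ((i + 1) * TSB_e (k + j)) ω - W (i * TSB_e (k + j)) ω|}
        ≤ ENNReal.ofReal (2 * Real.exp (-(TSB_a k j) ^ 2 / (2 * TSB_e (k + j)))) := by
    intro j i
    have he := TSB_e_pos (k + j)
    have hst : (i:ℝ) * TSB_e (k + j) < ((i:ℝ) + 1) * TSB_e (k + j) := by nlinarith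
    have hdiff : ((i:ℝ) + 1) * TSB_e (k + j) - (i:ℝ) * TSB_e (k + j) = TSB_e (k + j) := by ring
    have := TSB_inc_tail P W hmap (s := (i:ℝ) * TSB_e (k + j)) (t := ((i:ℝ) + 1) * TSB_e (k + j))
      (by positivity) hst (TSB_a_pos k j) (by rw [hdiff]; exact TSB_sqrt_le_a k j)
    rw [hdiff] at this
    exact_mod_cast this
  have hterm : ∀ j : ℕ,
      P (⋃ i ∈ Finset.range (2 ^ j),
        {ω | TSB_a k j ≤ |W ((i + 1) * TSB_e (k + j)) ω - W (i * TSB_e (k + j)) ω|})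
      ≤ ENNReal.ofReal ((((k:ℝ) + 2) ^ 2)⁻¹ * (3:ℝ)⁻¹ ^ (j + 1)) := by
    intro j
    refine (measure_biUnion_finset_le _ _).trans ?_
    have hbound : ∀ i ∈ Finset.range (2 ^ j),
        P {ω | TSB_a k j ≤ |W ((i + 1) * TSB_e (k + j)) ω - W (i * TSB_e (k + j)) ω|}
        ≤ ENNReal.ofReal (2 * Real.exp (-(TSB_a k j) ^ 2 / (2 * TSB_e (k + j)))) :=
      fun i _ => hsingle j i
    refine (Finset.sum_le_card_nsmul _ _ _ hbound).trans ?_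
    rw [Finset.card_range, nsmul_eq_mul]
    have hexp : (2:ℝ) ^ j * (2 * Real.exp (-(TSB_a k j) ^ 2 / (2 * TSB_e (k + j))))
        ≤ (((k:ℝ) + 2) ^ 2)⁻¹ * (3:ℝ)⁻¹ ^ (j + 1) := by
      have he := TSB_e_pos (k + j)
      have hsq : (TSB_a k j) ^ 2 = TSB_e (k + j) *
          (2 * Real.sqrt (j + 1) + 2 * Real.sqrt (Real.log (k + 2))) ^ 2 := by
        rw [TSB_a, mul_pow, Real.sq_sqrt he.le]
      have hj1 : Real.sqrt ((j:ℝ) + 1) ^ 2 = (j:ℝ) + 1 := Real.sq_sqrt (by positivity)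
      have hlk : Real.sqrt (Real.log ((k:ℝ) + 2)) ^ 2 = Real.log ((k:ℝ) + 2) :=
        Real.sq_sqrt (TSB_log_k2_pos k).le
      have hcross : (0:ℝ) ≤ 8 * Real.sqrt (j + 1) * Real.sqrt (Real.log (k + 2)) := by positivity
      have hsqge : (4 * ((j:ℝ) + 1) + 4 * Real.log ((k:ℝ) + 2))
          ≤ (2 * Real.sqrt (j + 1) + 2 * Real.sqrt (Real.log (k + 2))) ^ 2 := by
        have expand : (2 * Real.sqrt ((j:ℝ) + 1) + 2 * Real.sqrt (Real.log ((k:ℝ) + 2))) ^ 2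
            = 4 * (Real.sqrt ((j:ℝ) + 1)) ^ 2 + 4 * (Real.sqrt (Real.log ((k:ℝ) + 2))) ^ 2
              + 8 * Real.sqrt ((j:ℝ) + 1) * Real.sqrt (Real.log ((k:ℝ) + 2)) := by ring
        rw [expand, hj1, hlk]
        linarith
      have hexple : Real.exp (-(TSB_a k j) ^ 2 / (2 * TSB_e (k + j)))
          ≤ Real.exp (-(2 * ((j:ℝ) + 1)) - 2 * Real.log ((k:ℝ) + 2)) := by
        apply Real.exp_le_exp.2
        rw [hsq]
        rw [div_le_iff₀ (by positivity)]
        nlinarith [hsqge, he]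
      have hsplit : Real.exp (-(2 * ((j:ℝ) + 1)) - 2 * Real.log ((k:ℝ) + 2))
          = Real.exp (-(2 * ((j:ℝ) + 1))) * ((((k:ℝ) + 2) ^ 2)⁻¹) := by
        rw [Real.exp_sub]
        congr 1
        rw [show (2:ℝ) * Real.log ((k:ℝ) + 2) = Real.log (((k:ℝ) + 2) ^ 2) by
          rw [Real.log_pow]; push_cast; ring]
        rw [Real.exp_log (by positivity)]
      have hgeo : (2:ℝ) ^ j * (2 * Real.exp (-(2 * ((j:ℝ) + 1)))) ≤ (3:ℝ)⁻¹ ^ (j + 1) := by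
        have h1 : (2:ℝ) ^ j * 2 = 2 ^ (j + 1) := by rw [pow_succ]
        have h2 : Real.exp (-(2 * ((j:ℝ) + 1))) = (Real.exp 2)⁻¹ ^ (j + 1) := by
          rw [← Real.exp_neg]
          rw [← Real.exp_nat_mul]
          congr 1
          push_cast
          ring
        have heq : (2:ℝ) ^ j * (2 * Real.exp (-(2 * ((j:ℝ) + 1))))
            = (2 * (Real.exp 2)⁻¹) ^ (j + 1) := by
          rw [mul_pow, ← h1, h2]
          ring
        rw [heq]
        apply pow_le_pow_left₀ (by positivity)
        have he2 : (6:ℝ) ≤ Real.exp 2 := by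
          have h3 : Real.exp 2 = Real.exp 1 * Real.exp 1 := by
            rw [← Real.exp_add]; norm_num
          nlinarith [Real.exp_one_gt_d9]
        rw [show (2:ℝ) * (Real.exp 2)⁻¹ = 2 / Real.exp 2 by rw [div_eq_mul_inv],
          show (3:ℝ)⁻¹ = 1 / 3 by norm_num,
          div_le_div_iff₀ (Real.exp_pos 2) (by norm_num)]
        linarith
      calc (2:ℝ) ^ j * (2 * Real.exp (-(TSB_a k j) ^ 2 / (2 * TSB_e (k + j))))
          ≤ (2:ℝ) ^ j * (2 * (Real.exp (-(2 * ((j:ℝ) + 1))) * ((((k:ℝ) + 2) ^ 2)⁻¹))) := by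
            rw [← hsplit]
            have h2j : (0:ℝ) ≤ (2:ℝ)^j := by positivity
            nlinarith [hexple]
        _ = ((2:ℝ) ^ j * (2 * Real.exp (-(2 * ((j:ℝ) + 1))))) * ((((k:ℝ) + 2) ^ 2)⁻¹) := by ring
        _ ≤ (3:ℝ)⁻¹ ^ (j + 1) * ((((k:ℝ) + 2) ^ 2)⁻¹) := by
            apply mul_le_mul_of_nonneg_right hgeo (by positivity)
        _ = (((k:ℝ) + 2) ^ 2)⁻¹ * (3:ℝ)⁻¹ ^ (j + 1) := by ring
    have hcast : ((2 ^ j : ℕ) : ℝ≥0∞) * ENNReal.ofReal (2 * Real.exp (-(TSB_a k j) ^ 2 / (2 * TSB_e (k + j))))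
        = ENNReal.ofReal ((2:ℝ) ^ j * (2 * Real.exp (-(TSB_a k j) ^ 2 / (2 * TSB_e (k + j))))) := by
      rw [← ENNReal.ofReal_natCast, ← ENNReal.ofReal_mul (by positivity)]
      push_cast
      ring_nf
    rw [hcast]
    exact ENNReal.ofReal_le_ofReal hexp
  refine (ENNReal.tsum_le_tsum hterm).trans ?_
  have hsummable : Summable (fun j : ℕ => (((k:ℝ) + 2) ^ 2)⁻¹ * (3:ℝ)⁻¹ ^ (j + 1)) := by
    apply Summable.mul_left
    exact (summable_geometric_of_lt_one (by norm_num) (by norm_num)).comp_injective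
      (add_left_injective 1)
  rw [← ENNReal.ofReal_tsum_of_nonneg (fun j => by positivity) hsummable]
  apply ENNReal.ofReal_le_ofReal
  have : ∑' j : ℕ, (((k:ℝ) + 2) ^ 2)⁻¹ * (3:ℝ)⁻¹ ^ (j + 1)
      = (((k:ℝ) + 2) ^ 2)⁻¹ * ∑' j : ℕ, (3:ℝ)⁻¹ ^ (j + 1) := tsum_mul_left
  rw [this]
  have htsum : ∑' j : ℕ, (3:ℝ)⁻¹ ^ (j + 1) ≤ 1 := by
    have h1 : ∑' j : ℕ, (3:ℝ)⁻¹ ^ (j + 1) = (3:ℝ)⁻¹ * ∑' j : ℕ, (3:ℝ)⁻¹ ^ j := by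
      simp_rw [pow_succ, mul_comm]
      exact tsum_mul_left
    rw [h1, tsum_geometric_of_lt_one (by norm_num) (by norm_num)]
    norm_num
  nlinarith [htsum, inv_nonneg.2 (sq_nonneg ((k:ℝ) + 2))]
end Prob

lemma TSB_sqrt_pow (x : ℝ) (hx : 0 ≤ x) (n : ℕ) :
    Real.sqrt (x ^ n) = Real.sqrt x ^ n := by
  induction n with
  | zero => simp
  | succ n ih => rw [pow_succ, pow_succ, Real.sqrt_mul (by positivity), ih]

lemma TSB_geom_sum {ρ : ℝ} (h0 : 0 ≤ ρ) (h1 : ρ < 1) (m : ℕ) :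
    ∑ j ∈ Finset.range m, ρ ^ j ≤ (1 - ρ)⁻¹ := by
  have hne : ρ ≠ 1 := ne_of_lt h1
  have h2 : (ρ ^ m - 1) / (ρ - 1) = (1 - ρ ^ m) / (1 - ρ) := by
    rw [← neg_div_neg_eq]; ring_nf
  rw [geom_sum_eq hne, h2, inv_eq_one_div]
  gcongr
  · nlinarith [pow_nonneg h0 m]

lemma TSB_sqrt_log2 : (0.83 : ℝ) ≤ Real.sqrt (Real.log 2) := by
  have h := Real.log_two_gt_d9
  have hnn : (0:ℝ) ≤ Real.log 2 := TSB_log_two_pos.le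
  by_contra hc
  push_neg at hc
  have := Real.sq_sqrt hnn
  nlinarith [Real.sqrt_nonneg (Real.log 2)]

lemma TSB_a_sum (k m : ℕ) :
    ∑ j ∈ Finset.range m, TSB_a k j
      ≤ 50 * Real.sqrt (TSB_e k) * Real.sqrt (Real.log (k + 2)) := by
  set r : ℝ := Real.sqrt 2⁻¹ with hrdef
  set q : ℝ := Real.sqrt (Real.sqrt 2) with hqdef
  set θ : ℝ := 2 * Real.sqrt (Real.log (k + 2)) with hθdef
  have hrnn : 0 ≤ r := Real.sqrt_nonneg _
  have hqnn : 0 ≤ q := Real.sqrt_nonneg _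
  have hr2 : r ^ 2 = 2⁻¹ := Real.sq_sqrt (by norm_num)
  have hq2 : q ^ 2 = Real.sqrt 2 := Real.sq_sqrt (Real.sqrt_nonneg _)
  have hq4 : q ^ 4 = 2 := by
    have : q ^ 4 = (q ^ 2) ^ 2 := by ring
    rw [this, hq2, Real.sq_sqrt (by norm_num : (0:ℝ) ≤ 2)]
  have hrle : r ≤ 3 / 4 := by
    by_contra hc
    push_neg at hc
    nlinarith
  have hρ4 : (r * q) ^ 4 = 2⁻¹ := by
    have : (r * q) ^ 4 = (r ^ 2) ^ 2 * q ^ 4 := by ring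
    rw [this, hr2, hq4]
    norm_num
  have hρle : r * q ≤ 6 / 7 := by
    by_contra hc
    push_neg at hc
    have h2 : (6 / 7 : ℝ) ^ 2 < (r * q) ^ 2 := by nlinarith [mul_nonneg hrnn hqnn]
    have h4 : (6 / 7 : ℝ) ^ 4 < (r * q) ^ 4 := by nlinarith [mul_nonneg hrnn hqnn]
    rw [hρ4] at h4
    norm_num at h4
  -- pointwise bound on each term
  have hsqrtj : ∀ j : ℕ, Real.sqrt ((j:ℝ) + 1) ≤ 2 * q ^ j := by
    intro j
    have hj4 : ((j:ℝ) + 1) ≤ 4 * Real.sqrt 2 ^ j := by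
      induction j with
      | zero => norm_num
      | succ n ih =>
        have hs2 : (1:ℝ) ≤ Real.sqrt 2 := by
          rw [show (1:ℝ) = Real.sqrt 1 from Real.sqrt_one.symm]
          exact Real.sqrt_le_sqrt (by norm_num)
        have h4n : (4:ℝ) ≤ 4 * Real.sqrt 2 ^ n := by
          have : (1:ℝ) ≤ Real.sqrt 2 ^ n := one_le_pow₀ hs2
          linarith
        have h14 : (1.4 : ℝ) ≤ Real.sqrt 2 := by
          nlinarith [Real.sq_sqrt (by norm_num : (0:ℝ) ≤ 2), Real.sqrt_nonneg 2]
        have hXn : (1:ℝ) ≤ Real.sqrt 2 ^ n := one_le_pow₀ hs2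
        push_cast
        calc ((n:ℝ) + 1 + 1) ≤ 4 * Real.sqrt 2 ^ n + 1 := by linarith
          _ ≤ 4 * Real.sqrt 2 ^ n * Real.sqrt 2 := by nlinarith
          _ = 4 * Real.sqrt 2 ^ (n + 1) := by rw [pow_succ]; ring
    calc Real.sqrt ((j:ℝ) + 1) ≤ Real.sqrt (4 * Real.sqrt 2 ^ j) := Real.sqrt_le_sqrt hj4
      _ = 2 * q ^ j := by
        rw [Real.sqrt_mul (by norm_num), show Real.sqrt 4 = 2 by
          rw [show (4:ℝ) = 2 ^ 2 by norm_num, Real.sqrt_sq (by norm_num : (0:ℝ) ≤ 2)],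
          TSB_sqrt_pow _ (Real.sqrt_nonneg 2), hqdef]
  have hterm : ∀ j : ℕ, TSB_a k j
      ≤ Real.sqrt (TSB_e k) * (4 * (r * q) ^ j + θ * r ^ j) := by
    intro j
    have heq : TSB_a k j = Real.sqrt (TSB_e k) * r ^ j * (2 * Real.sqrt ((j:ℝ) + 1) + θ) := by
      rw [TSB_a, TSB_e_add, Real.sqrt_mul (TSB_e_pos k).le,
        show Real.sqrt (TSB_e j) = r ^ j by
          rw [TSB_e, TSB_sqrt_pow _ (by norm_num), hrdef], hθdef]
    rw [heq]
    have h1 : 2 * Real.sqrt ((j:ℝ) + 1) + θ ≤ 4 * q ^ j + θ := by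
      have := hsqrtj j
      linarith
    calc Real.sqrt (TSB_e k) * r ^ j * (2 * Real.sqrt ((j:ℝ) + 1) + θ)
        ≤ Real.sqrt (TSB_e k) * r ^ j * (4 * q ^ j + θ) := by
          apply mul_le_mul_of_nonneg_left h1 (by positivity)
      _ = Real.sqrt (TSB_e k) * (4 * (r * q) ^ j + θ * r ^ j) := by
          rw [mul_pow]; ring
  have hθpos : 0 < θ := by
    rw [hθdef]
    have : 0 < Real.sqrt (Real.log (k + 2)) := Real.sqrt_pos.2 (TSB_log_k2_pos k)
    linarith
  have hθ166 : (1.66 : ℝ) ≤ θ := by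
    rw [hθdef]
    have hmono : Real.sqrt (Real.log 2) ≤ Real.sqrt (Real.log ((k:ℝ) + 2)) := by
      apply Real.sqrt_le_sqrt
      apply Real.log_le_log (by norm_num)
      have : (0:ℝ) ≤ (k:ℝ) := Nat.cast_nonneg k
      linarith
    have := TSB_sqrt_log2
    linarith
  have hg1 : ∑ j ∈ Finset.range m, (r * q) ^ j ≤ 7 := by
    refine (TSB_geom_sum (mul_nonneg hrnn hqnn) (by nlinarith) m).trans ?_
    rw [inv_eq_one_div, div_le_iff₀ (by nlinarith)]
    nlinarith
  have hg2 : ∑ j ∈ Finset.range m, r ^ j ≤ 4 := by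
    refine (TSB_geom_sum hrnn (by nlinarith) m).trans ?_
    rw [inv_eq_one_div, div_le_iff₀ (by nlinarith)]
    nlinarith
  have hcnn : (0:ℝ) ≤ Real.sqrt (TSB_e k) := Real.sqrt_nonneg _
  calc ∑ j ∈ Finset.range m, TSB_a k j
      ≤ ∑ j ∈ Finset.range m, Real.sqrt (TSB_e k) * (4 * (r * q) ^ j + θ * r ^ j) :=
        Finset.sum_le_sum (fun j _ => hterm j)
    _ = (Real.sqrt (TSB_e k) * 4) * (∑ j ∈ Finset.range m, (r * q) ^ j)
        + (Real.sqrt (TSB_e k) * θ) * (∑ j ∈ Finset.range m, r ^ j) := by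
        have hper : ∀ j : ℕ, Real.sqrt (TSB_e k) * (4 * (r * q) ^ j + θ * r ^ j)
            = (Real.sqrt (TSB_e k) * 4) * (r * q) ^ j + (Real.sqrt (TSB_e k) * θ) * r ^ j :=
          fun j => by ring
        simp_rw [hper]
        rw [Finset.sum_add_distrib, ← Finset.mul_sum, ← Finset.mul_sum]
    _ ≤ (Real.sqrt (TSB_e k) * 4) * 7 + (Real.sqrt (TSB_e k) * θ) * 4 := by
        have hs1 : (0:ℝ) ≤ ∑ j ∈ Finset.range m, (r * q) ^ j :=
          Finset.sum_nonneg fun j _ => by positivity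
        have hs2 : (0:ℝ) ≤ ∑ j ∈ Finset.range m, r ^ j :=
          Finset.sum_nonneg fun j _ => by positivity
        have := mul_le_mul_of_nonneg_left hg1 (by positivity : (0:ℝ) ≤ Real.sqrt (TSB_e k) * 4)
        have := mul_le_mul_of_nonneg_left hg2 (by positivity : (0:ℝ) ≤ Real.sqrt (TSB_e k) * θ)
        linarith
    _ ≤ Real.sqrt (TSB_e k) * (25 * θ) := by nlinarith
    _ = 50 * Real.sqrt (TSB_e k) * Real.sqrt (Real.log (k + 2)) := by
        rw [hθdef]; ring

lemma TSB_chain {f : ℝ → ℝ} (hf : Continuous f) (hf0 : f 0 = 0) (k : ℕ)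
    (hE : ∀ j i : ℕ, i < 2 ^ j →
      |f (((i:ℝ) + 1) * TSB_e (k + j)) - f ((i:ℝ) * TSB_e (k + j))| ≤ TSB_a k j) :
    ∀ s ∈ Icc (0:ℝ) (TSB_e k),
      |f s| ≤ 50 * Real.sqrt (TSB_e k) * Real.sqrt (Real.log (k + 2)) := by
  -- dyadic points bound
  have hdyadic : ∀ m : ℕ, ∀ i : ℕ, i ≤ 2 ^ m →
      |f ((i:ℝ) * TSB_e (k + m))| ≤ ∑ j ∈ Finset.range (m + 1), TSB_a k j := by
    intro m
    induction m with
    | zero =>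
      intro i hi
      interval_cases i
      · simpa [hf0] using Finset.sum_nonneg
          (fun j (_ : j ∈ Finset.range 1) => (TSB_a_pos k j).le)
      · have h := hE 0 0 (by norm_num)
        rw [Finset.sum_range_one]
        simpa [hf0] using h
    | succ m ih =>
      intro i hi
      rcases Nat.even_or_odd i with ⟨i', hi'⟩ | ⟨i', hi'⟩
      · -- even
        subst hi'
        have hi'le : i' ≤ 2 ^ m := by
          have := Nat.pow_succ 2 m
          omega
        have hpt : ((i' + i' : ℕ) : ℝ) * TSB_e (k + (m + 1)) = (i' : ℝ) * TSB_e (k + m) := by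
          push_cast
          rw [show k + (m + 1) = (k + m) + 1 by omega, ← TSB_e_succ (k + m)]
          ring
        rw [hpt]
        refine (ih i' hi'le).trans ?_
        exact Finset.sum_le_sum_of_subset_of_nonneg
          (Finset.range_subset_range.2 (by omega)) (fun j _ _ => (TSB_a_pos k j).le)
      · -- odd
        subst hi'
        have hi'lt : i' < 2 ^ m := by
          have := Nat.pow_succ 2 m
          omega
        have h2i' : 2 * i' < 2 ^ (m + 1) := by
          have := Nat.pow_succ 2 m
          omega
        have hstep := hE (m + 1) (2 * i') h2i'
        have hpt : ((2 * i' : ℕ) : ℝ) * TSB_e (k + (m + 1)) = (i' : ℝ) * TSB_e (k + m) := by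
          push_cast
          rw [show k + (m + 1) = (k + m) + 1 by omega, ← TSB_e_succ (k + m)]
          ring
        have hpt2 : ((2 * i' + 1 : ℕ) : ℝ) = ((2 * i' : ℕ) : ℝ) + 1 := by push_cast; ring
        have htri : |f (((2 * i' + 1 : ℕ) : ℝ) * TSB_e (k + (m + 1)))|
            ≤ |f (((2 * i' : ℕ) : ℝ) * TSB_e (k + (m + 1)))| + TSB_a k (m + 1) := by
          have habs := abs_sub_abs_le_abs_sub
            (f (((2 * i' : ℕ) : ℝ) + 1) * TSB_e (k + (m + 1))) 0
          calc |f (((2 * i' + 1 : ℕ) : ℝ) * TSB_e (k + (m + 1)))|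
              = |f (((2 * i' : ℕ) : ℝ) * TSB_e (k + (m + 1)))
                + (f ((((2 * i' : ℕ) : ℝ) + 1) * TSB_e (k + (m + 1)))
                  - f (((2 * i' : ℕ) : ℝ) * TSB_e (k + (m + 1))))| := by
                rw [hpt2]; ring_nf
            _ ≤ |f (((2 * i' : ℕ) : ℝ) * TSB_e (k + (m + 1)))|
                + |f ((((2 * i' : ℕ) : ℝ) + 1) * TSB_e (k + (m + 1)))
                  - f (((2 * i' : ℕ) : ℝ) * TSB_e (k + (m + 1)))| := abs_add_le _ _
            _ ≤ |f (((2 * i' : ℕ) : ℝ) * TSB_e (k + (m + 1)))| + TSB_a k (m + 1) := by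
                have := hE (m + 1) (2 * i') h2i'
                linarith
        refine htri.trans ?_
        rw [hpt]
        have := ih i' hi'lt.le
        rw [Finset.sum_range_succ]
        linarith
  -- partial sums are bounded
  have hB : ∀ m : ℕ, ∑ j ∈ Finset.range (m + 1), TSB_a k j
      ≤ 50 * Real.sqrt (TSB_e k) * Real.sqrt (Real.log (k + 2)) := fun m => TSB_a_sum k (m + 1)
  -- density argument
  intro s hs
  obtain ⟨hs0, hsT⟩ := hs
  set B := 50 * Real.sqrt (TSB_e k) * Real.sqrt (Real.log (k + 2)) with hBdef
  -- approximating sequence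
  set u : ℕ → ℕ := fun m => ⌊s / TSB_e (k + m)⌋₊ with hudef
  set σ : ℕ → ℝ := fun m => (u m : ℝ) * TSB_e (k + m) with hσdef
  have hum : ∀ m, u m ≤ 2 ^ m := by
    intro m
    have hle : s / TSB_e (k + m) ≤ ((2 ^ m : ℕ) : ℝ) := by
      rw [div_le_iff₀ (TSB_e_pos _)]
      have : ((2 ^ m : ℕ) : ℝ) * TSB_e (k + m) = TSB_e k := by
        rw [TSB_e_add, TSB_e, TSB_e]
        push_cast
        rw [← mul_assoc]
        rw [show (2:ℝ) ^ m * 2⁻¹ ^ k * 2⁻¹ ^ m = 2⁻¹ ^ k * (2 ^ m * 2⁻¹ ^ m) by ring]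
        rw [← mul_pow]
        norm_num
      rw [this]
      exact hsT
    calc u m = ⌊s / TSB_e (k + m)⌋₊ := rfl
      _ ≤ ⌊((2 ^ m : ℕ) : ℝ)⌋₊ := Nat.floor_le_floor hle
      _ = 2 ^ m := Nat.floor_natCast _
  have hσle : ∀ m, |f (σ m)| ≤ B := by
    intro m
    exact (hdyadic m (u m) (hum m)).trans (hB m)
  have hσdist : ∀ m, |σ m - s| ≤ TSB_e (k + m) := by
    intro m
    have he := TSB_e_pos (k + m)
    have h1 : (u m : ℝ) ≤ s / TSB_e (k + m) :=
      Nat.floor_le (div_nonneg hs0 he.le)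
    have h2 : s / TSB_e (k + m) < (u m : ℝ) + 1 := Nat.lt_floor_add_one _
    have h1' : (u m : ℝ) * TSB_e (k + m) ≤ s := by
      rw [← le_div_iff₀ he]
      exact h1
    have h2' : s < ((u m : ℝ) + 1) * TSB_e (k + m) := by
      rw [← div_lt_iff₀ he]
      exact h2
    rw [abs_le, hσdef]
    constructor <;> simp only <;> nlinarith
  have hσtend : Tendsto σ atTop (nhds s) := by
    rw [tendsto_iff_dist_tendsto_zero]
    have hbound : ∀ m, dist (σ m) s ≤ TSB_e k * (2⁻¹ : ℝ) ^ m := by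
      intro m
      rw [Real.dist_eq]
      refine (hσdist m).trans ?_
      rw [TSB_e_add]
      exact le_of_eq rfl
    refine squeeze_zero (fun m => dist_nonneg) hbound ?_
    have := tendsto_pow_atTop_nhds_zero_of_lt_one (by norm_num : (0:ℝ) ≤ 2⁻¹)
      (by norm_num : (2⁻¹:ℝ) < 1)
    have h2 := this.const_mul (TSB_e k)
    simpa using h2
  have hftend : Tendsto (fun m => |f (σ m)|) atTop (nhds |f s|) :=
    ((hf.tendsto s).comp hσtend).abs
  exact le_of_tendsto hftend (Filter.Eventually.of_forall hσle)

section Path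
variable {Ω : Type*} [MeasurableSpace Ω] (P : Measure Ω) (W : ℝ → Ω → ℝ)

lemma TSB_path_bound
    (hcont : ∀ ω, Continuous fun t => W t ω) (h0 : ∀ ω, W 0 ω = 0)
    (hmap : ∀ s t : ℝ, 0 ≤ s → s < t →
      Measure.map (fun ω => W t ω - W s ω) P = gaussianReal 0 (Real.toNNReal (t - s))) :
    ∀ᵐ ω ∂P, ∃ A : ℝ, 1 ≤ A ∧ ∀ s ∈ Ioc (0:ℝ) 1,
      |W s ω| ≤ A * Real.sqrt (s * (1 + Real.log (1 + Real.log s⁻¹))) := by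
  have hsummable : Summable (fun k : ℕ => (((k:ℝ) + 2) ^ 2)⁻¹) := by
    have hbase : Summable (fun n : ℕ => ((n : ℝ) ^ 2)⁻¹) := by
      have := summable_one_div_nat_pow (p := 2).mpr one_lt_two
      simpa [one_div] using this
    have := (summable_nat_add_iff (f := fun n : ℕ => ((n : ℝ) ^ 2)⁻¹) 2).2 hbase
    refine this.congr fun n => ?_
    push_cast
    ring_nf
  have htsum : ∑' k : ℕ, P (TSB_E W k)ᶜ ≠ ∞ := by
    refine ne_top_of_le_ne_top ?_ (ENNReal.tsum_le_tsum (fun k => TSB_E_compl_le P W hmap k))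
    rw [← ENNReal.ofReal_tsum_of_nonneg (fun k => by positivity) hsummable]
    exact ENNReal.ofReal_ne_top
  filter_upwards [ae_finite_setOf_mem htsum] with ω hω
  -- all but finitely many events hold
  obtain ⟨K, hK⟩ : ∃ K : ℕ, ∀ k, K + 1 ≤ k → ω ∈ TSB_E W k := by
    rcases hω.bddAbove with ⟨K, hK⟩
    refine ⟨K, fun k hk => ?_⟩
    by_contra hbad
    have : k ≤ K := hK (by exact hbad)
    omega
  -- uniform bound on [0,1]
  obtain ⟨M, hM⟩ : ∃ M : ℝ, ∀ s ∈ Icc (0:ℝ) 1, |W s ω| ≤ M := by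
    obtain ⟨M, hM⟩ := (isCompact_Icc (a := (0:ℝ)) (b := 1)).exists_bound_of_continuousOn
      ((hcont ω).continuousOn)
    exact ⟨M, fun s hs => hM s hs⟩
  set M' : ℝ := max M 0 with hM'def
  set A : ℝ := 71 + M' * (Real.sqrt 2) ^ (K + 1) with hAdef
  have hAM : 0 ≤ M' * (Real.sqrt 2) ^ (K + 1) := by positivity
  refine ⟨A, by linarith, ?_⟩
  intro s hs
  obtain ⟨hs0, hs1⟩ := hs
  set L : ℝ := Real.log s⁻¹ with hLdef
  have hL0 : 0 ≤ L := Real.log_nonneg (one_le_inv_iff₀.2 ⟨hs0, hs1⟩)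
  set G : ℝ := 1 + Real.log (1 + L) with hGdef
  have hG1 : 1 ≤ G := by
    have : 0 ≤ Real.log (1 + L) := Real.log_nonneg (by linarith)
    rw [hGdef]; linarith
  have hsG : Real.sqrt s * Real.sqrt G = Real.sqrt (s * G) :=
    (Real.sqrt_mul hs0.le G).symm
  -- choose the dyadic scale
  set kk : ℕ := ⌊Real.logb 2 s⁻¹⌋₊ with hkkdef
  have hlogb0 : 0 ≤ Real.logb 2 s⁻¹ :=
    Real.logb_nonneg one_lt_two (one_le_inv_iff₀.2 ⟨hs0, hs1⟩)
  have hfl : (kk : ℝ) ≤ Real.logb 2 s⁻¹ := Nat.floor_le hlogb0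
  have hfl2 : Real.logb 2 s⁻¹ < (kk : ℝ) + 1 := Nat.lt_floor_add_one _
  have hrpow : (2:ℝ) ^ (Real.logb 2 s⁻¹) = s⁻¹ :=
    Real.rpow_logb (by norm_num) (by norm_num) (by positivity)
  have hsle : s ≤ TSB_e kk := by
    have h1 : (2:ℝ) ^ (kk:ℝ) ≤ s⁻¹ := by
      rw [← hrpow]
      exact Real.rpow_le_rpow_of_exponent_le (by norm_num) hfl
    rw [Real.rpow_natCast] at h1
    rw [TSB_e, inv_pow, le_inv_comm₀ hs0 (by positivity)]
    exact h1
  have hsge : TSB_e kk ≤ 2 * s := by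
    have h1 : s⁻¹ < (2:ℝ) ^ ((kk:ℝ) + 1) := by
      rw [← hrpow]
      exact Real.rpow_lt_rpow_of_exponent_lt (by norm_num) hfl2
    have h2 : s⁻¹ < (2:ℝ) ^ (kk + 1 : ℕ) := by
      rw [← Real.rpow_natCast (2:ℝ) (kk+1)]
      push_cast
      exact h1
    rw [TSB_e, inv_pow]
    have h3 : ((2:ℝ) ^ (kk + 1 : ℕ))⁻¹ < s := by
      rw [inv_lt_comm₀ (by positivity) hs0]
      exact h2
    rw [pow_succ] at h3
    have : ((2:ℝ) ^ kk)⁻¹ = 2 * ((2:ℝ) ^ kk * 2)⁻¹ := by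
      rw [mul_inv]
      field_simp
    rw [this]
    linarith
  -- log (kk+2) ≤ G
  have hlogkk : Real.log ((kk:ℝ) + 2) ≤ G := by
    have hl2 : (0.69 : ℝ) ≤ Real.log 2 := by
      have := Real.log_two_gt_d9
      linarith
    have hkkle : (kk : ℝ) ≤ 1.5 * L := by
      have heq : Real.logb 2 s⁻¹ = L / Real.log 2 := rfl
      have hfl' : (kk : ℝ) * Real.log 2 ≤ L := by
        have := (le_div_iff₀ TSB_log_two_pos).mp (heq ▸ hfl)
        linarith
      nlinarith [hL0, Nat.cast_nonneg (α := ℝ) kk]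
    have h1 : (kk:ℝ) + 2 ≤ 2 * (1 + L) := by linarith
    calc Real.log ((kk:ℝ) + 2) ≤ Real.log (2 * (1 + L)) :=
          Real.log_le_log (by positivity) h1
      _ = Real.log 2 + Real.log (1 + L) := Real.log_mul (by norm_num) (by linarith)
      _ ≤ G := by
          rw [hGdef]
          have := Real.log_le_sub_one_of_pos (x := (2:ℝ)) (by norm_num)
          linarith
  have hsqrtlogkk : Real.sqrt (Real.log ((kk:ℝ) + 2)) ≤ Real.sqrt G :=
    Real.sqrt_le_sqrt hlogkk
  by_cases hcase : K + 1 ≤ kk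
  · -- use the good event
    have hEkk := hK kk hcase
    have hchain := TSB_chain (hcont ω) (h0 ω) kk (fun j i hij => hEkk j i hij)
    have hb := hchain s ⟨hs0.le, hsle⟩
    have h2s : Real.sqrt (TSB_e kk) ≤ Real.sqrt 2 * Real.sqrt s := by
      rw [← Real.sqrt_mul (by norm_num : (0:ℝ) ≤ 2)]
      exact Real.sqrt_le_sqrt hsge
    calc |W s ω| ≤ 50 * Real.sqrt (TSB_e kk) * Real.sqrt (Real.log ((kk:ℝ) + 2)) := hb
      _ ≤ 50 * (Real.sqrt 2 * Real.sqrt s) * Real.sqrt G := by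
          apply mul_le_mul (by
            apply mul_le_mul_of_nonneg_left h2s (by norm_num)) hsqrtlogkk
            (Real.sqrt_nonneg _) (by positivity)
      _ = 50 * Real.sqrt 2 * (Real.sqrt s * Real.sqrt G) := by ring
      _ ≤ 71 * Real.sqrt (s * G) := by
          rw [hsG]
          have h50 : 50 * Real.sqrt 2 ≤ 71 := by
            nlinarith [Real.sq_sqrt (by norm_num : (0:ℝ) ≤ 2), Real.sqrt_nonneg 2]
          exact mul_le_mul_of_nonneg_right h50 (Real.sqrt_nonneg _)
      _ ≤ A * Real.sqrt (s * G) := by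
          apply mul_le_mul_of_nonneg_right _ (Real.sqrt_nonneg _)
          rw [hAdef]
          linarith
  · -- small k: use the compact bound
    push_neg at hcase
    have hMb : |W s ω| ≤ M' := by
      refine (hM s ⟨hs0.le, hs1⟩).trans ?_
      exact le_max_left _ _
    have heK : TSB_e (K + 1) ≤ s := by
      have h1 : TSB_e (kk + 1) ≤ s := by
        have := TSB_e_succ kk
        linarith [hsge]
      refine le_trans ?_ h1
      rw [TSB_e, TSB_e]
      apply pow_le_pow_of_le_one (by norm_num) (by norm_num)
      omega
    have hq : (1:ℝ) ≤ (Real.sqrt 2) ^ (K + 1) * Real.sqrt s := by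
      have h1 : Real.sqrt (TSB_e (K + 1)) ≤ Real.sqrt s := Real.sqrt_le_sqrt heK
      have h2 : Real.sqrt (TSB_e (K + 1)) = (Real.sqrt 2⁻¹) ^ (K + 1) := by
        rw [TSB_e, TSB_sqrt_pow _ (by norm_num)]
      have h3 : (Real.sqrt 2) ^ (K + 1) * (Real.sqrt 2⁻¹) ^ (K + 1) = 1 := by
        rw [← mul_pow, ← Real.sqrt_mul (by norm_num : (0:ℝ) ≤ 2)]
        norm_num
      calc (1:ℝ) = (Real.sqrt 2) ^ (K + 1) * (Real.sqrt 2⁻¹) ^ (K + 1) := h3.symm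
        _ ≤ (Real.sqrt 2) ^ (K + 1) * Real.sqrt s := by
            apply mul_le_mul_of_nonneg_left _ (by positivity)
            rw [← h2]
            exact h1
    have hsqs : Real.sqrt s ≤ Real.sqrt (s * G) := by
      apply Real.sqrt_le_sqrt
      nlinarith [hG1, hs0]
    calc |W s ω| ≤ M' := hMb
      _ = M' * 1 := (mul_one _).symm
      _ ≤ M' * ((Real.sqrt 2) ^ (K + 1) * Real.sqrt s) := by
          apply mul_le_mul_of_nonneg_left hq (le_max_right M 0)
      _ = M' * (Real.sqrt 2) ^ (K + 1) * Real.sqrt s := by ring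
      _ ≤ M' * (Real.sqrt 2) ^ (K + 1) * Real.sqrt (s * G) := by
          apply mul_le_mul_of_nonneg_left hsqs (by positivity)
      _ ≤ A * Real.sqrt (s * G) := by
          apply mul_le_mul_of_nonneg_right _ (Real.sqrt_nonneg _)
          rw [hAdef]
          linarith
end Path


set_option maxHeartbeats 2000000 in
/-- Drift bound for the inferior arm after `Q₂` reaches `δ^{-α}`: almost surely, for all
large `δ` and any solution with `Q₁(v) ≥ δ^{-α}` (`v = 2δ^{-α}`), for all
`t ∈ [τ*_δ, 1)`, `Q₂'(t) ≤ Φ(-g₁(t)√(Q₂(t))δ + C√(log log δ))` with `g₁(t) = √(Q₁(t)/t)`. -/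
theorem Q2_drift_bound {Ω : Type*} [MeasurableSpace Ω] (P : Measure Ω)
    (W₁ W₂ : ℝ → Ω → ℝ) (hW : IndepBMs P W₁ W₂) (α : ℝ) (hα : α ∈ Set.Ioo (1 : ℝ) 2) :
    ∀ᵐ ω ∂P, ∃ C > (0 : ℝ), ∃ δ₀ : ℝ, ∀ δ ≥ δ₀, ∀ Q₁ Q₂ : ℝ → ℝ,
      IsTwoArmSol (fun x => W₁ x ω) (fun x => W₂ x ω) δ Q₁ Q₂ →
      δ ^ (-α) ≤ Q₁ (2 * δ ^ (-α)) →
      ∀ t : ℝ,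
        sInf ({s ∈ Set.Icc (0 : ℝ) 1 | δ ^ (-α) ≤ Q₂ s} ∪ {1}) ≤ t → t < 1 →
        derivWithin Q₂ (Set.Icc 0 1) t ≤
          Phi (-(Real.sqrt (Q₁ t / t)) * Real.sqrt (Q₂ t) * δ +
            C * Real.sqrt (Real.log (Real.log δ))) := by
  obtain ⟨hW₁', hW₂', -⟩ := hW
  obtain ⟨hc1, h01, hm1, -⟩ := hW₁'
  obtain ⟨hc2, h02, hm2, -⟩ := hW₂'
  obtain ⟨hα1, hα2⟩ := hα
  filter_upwards [TSB_path_bound P W₁ hc1 h01 hm1, TSB_path_bound P W₂ hc2 h02 hm2]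
    with ω hA1 hA2
  obtain ⟨A₁, hA₁1, hb1⟩ := hA1
  obtain ⟨A₂, hA₂1, hb2⟩ := hA2
  set A : ℝ := max A₁ A₂ with hAdef
  have hA1' : 1 ≤ A := le_trans hA₁1 (le_max_left _ _)
  set Kα : ℝ := 2 + Real.log (1 + α) with hKαdef
  have hlog1α : 0 ≤ Real.log (1 + α) := Real.log_nonneg (by linarith)
  have hKα2 : 2 ≤ Kα := by rw [hKαdef]; linarith
  have hKαpos : 0 < Kα := by linarith
  set C : ℝ := 2 * A * Real.sqrt Kα + 1 with hCdef
  have hsqrtKα : 0 ≤ Real.sqrt Kα := Real.sqrt_nonneg _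
  have hC : 0 < C := by
    have : 0 ≤ 2 * A * Real.sqrt Kα := by positivity
    rw [hCdef]; linarith
  refine ⟨C, hC, max (Real.exp (Real.exp 1)) 3, ?_⟩
  intro δ hδ Q₁ Q₂ hsol hQ1v t hτ ht1
  obtain ⟨hQ1c, hQ2c, hQ1m, hQ2m, hQ10, hQ20, hsum, hQ1pos, hQ2pos, hder⟩ := hsol
  -- basic δ facts
  have hδ3 : (3:ℝ) ≤ δ := le_trans (le_max_right _ _) hδ
  have hδe : Real.exp (Real.exp 1) ≤ δ := le_trans (le_max_left _ _) hδ
  have hδ1 : (1:ℝ) < δ := by linarith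
  have hδ0 : (0:ℝ) < δ := by linarith
  set β : ℝ := δ ^ (-α) with hβdef
  have hβpos : 0 < β := Real.rpow_pos_of_pos hδ0 _
  have hβinv : β = (δ ^ α)⁻¹ := by rw [hβdef, Real.rpow_neg hδ0.le]
  have hδαpos : (0:ℝ) < δ ^ α := Real.rpow_pos_of_pos hδ0 _
  have hδα3 : (3:ℝ) ≤ δ ^ α := by
    have h1 : δ ^ (1:ℝ) ≤ δ ^ α := Real.rpow_le_rpow_of_exponent_le hδ1.le hα1.le
    rw [Real.rpow_one] at h1
    linarith
  have hβle : β ≤ 3⁻¹ := by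
    rw [hβinv]
    exact inv_anti₀ (by norm_num) hδα3
  -- log δ facts
  have hexp1 : (1:ℝ) ≤ Real.exp 1 := Real.one_le_exp (by norm_num)
  have hlogδ : Real.exp 1 ≤ Real.log δ := by
    calc Real.exp 1 = Real.log (Real.exp (Real.exp 1)) := (Real.log_exp _).symm
      _ ≤ Real.log δ := Real.log_le_log (Real.exp_pos _) hδe
  have hlogδ1 : 1 ≤ Real.log δ := le_trans hexp1 hlogδ
  have hlogδpos : 0 < Real.log δ := by linarith
  set LL : ℝ := Real.log (Real.log δ) with hLLdef
  have hLL1 : 1 ≤ LL := by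
    rw [hLLdef]
    calc (1:ℝ) = Real.log (Real.exp 1) := (Real.log_exp 1).symm
      _ ≤ Real.log (Real.log δ) := Real.log_le_log (Real.exp_pos _) hlogδ
  have hsqrtLL : 0 ≤ Real.sqrt LL := Real.sqrt_nonneg _
  have hsqrtLL1 : 1 ≤ Real.sqrt LL := by
    calc (1:ℝ) = Real.sqrt 1 := Real.sqrt_one.symm
      _ ≤ Real.sqrt LL := Real.sqrt_le_sqrt hLL1
  -- key path estimate, specialized
  have hclaim : ∀ s : ℝ, β ≤ s → s ≤ 1 →
      Real.sqrt (s * (1 + Real.log (1 + Real.log s⁻¹))) ≤ Real.sqrt Kα * Real.sqrt LL * Real.sqrt s := by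
    intro s hβs hs1
    have hspos : 0 < s := lt_of_lt_of_le hβpos hβs
    have hsinv : s⁻¹ ≤ δ ^ α := by
      have := inv_anti₀ hβpos hβs
      rw [hβinv, inv_inv] at this
      exact this
    have hl0 : 0 ≤ Real.log s⁻¹ := Real.log_nonneg (one_le_inv_iff₀.2 ⟨hspos, hs1⟩)
    have hlle : Real.log s⁻¹ ≤ α * Real.log δ := by
      calc Real.log s⁻¹ ≤ Real.log (δ ^ α) := Real.log_le_log (by positivity) hsinv
        _ = α * Real.log δ := Real.log_rpow hδ0 α
    have h1l : 1 + Real.log s⁻¹ ≤ (1 + α) * Real.log δ := by linarith [hlle, hlogδ1]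
    have hH : 1 + Real.log (1 + Real.log s⁻¹) ≤ Kα * LL := by
      have h2 : Real.log (1 + Real.log s⁻¹) ≤ Real.log ((1 + α) * Real.log δ) :=
        Real.log_le_log (by linarith) h1l
      have h3 : Real.log ((1 + α) * Real.log δ) = Real.log (1 + α) + LL := by
        rw [Real.log_mul (by linarith) (by linarith)]
      have h4 : 0 ≤ Real.log (1 + α) * (LL - 1) := mul_nonneg hlog1α (by linarith)
      rw [hKαdef]
      linarith [h2, h3, h4, hLL1]
    calc Real.sqrt (s * (1 + Real.log (1 + Real.log s⁻¹)))
        ≤ Real.sqrt (s * (Kα * LL)) :=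
          Real.sqrt_le_sqrt (mul_le_mul_of_nonneg_left hH hspos.le)
      _ = Real.sqrt Kα * Real.sqrt LL * Real.sqrt s := by
          rw [Real.sqrt_mul hspos.le, Real.sqrt_mul hKαpos.le]
          ring
  have hn1 : ∀ s : ℝ, β ≤ s → s ≤ 1 →
      |W₁ s ω| ≤ A * Real.sqrt Kα * Real.sqrt LL * Real.sqrt s := by
    intro s hβs hs1
    have hspos : 0 < s := lt_of_lt_of_le hβpos hβs
    calc |W₁ s ω| ≤ A₁ * Real.sqrt (s * (1 + Real.log (1 + Real.log s⁻¹))) :=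
          hb1 s ⟨hspos, hs1⟩
      _ ≤ A * (Real.sqrt Kα * Real.sqrt LL * Real.sqrt s) := by
          apply mul_le_mul (le_max_left _ _) (hclaim s hβs hs1) (Real.sqrt_nonneg _) (by linarith)
      _ = A * Real.sqrt Kα * Real.sqrt LL * Real.sqrt s := by ring
  have hn2 : ∀ s : ℝ, β ≤ s → s ≤ 1 →
      |W₂ s ω| ≤ A * Real.sqrt Kα * Real.sqrt LL * Real.sqrt s := by
    intro s hβs hs1
    have hspos : 0 < s := lt_of_lt_of_le hβpos hβs
    calc |W₂ s ω| ≤ A₂ * Real.sqrt (s * (1 + Real.log (1 + Real.log s⁻¹))) :=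
          hb2 s ⟨hspos, hs1⟩
      _ ≤ A * (Real.sqrt Kα * Real.sqrt LL * Real.sqrt s) := by
          apply mul_le_mul (le_max_right _ _) (hclaim s hβs hs1) (Real.sqrt_nonneg _) (by linarith)
      _ = A * Real.sqrt Kα * Real.sqrt LL * Real.sqrt s := by ring
  -- τ analysis
  by_cases hS : ({s ∈ Set.Icc (0:ℝ) 1 | β ≤ Q₂ s}).Nonempty
  swap
  · rw [Set.not_nonempty_iff_eq_empty] at hS
    rw [hS, Set.empty_union, csInf_singleton] at hτ
    linarith
  · have hSbdd : BddBelow {s ∈ Set.Icc (0:ℝ) 1 | β ≤ Q₂ s} := ⟨0, fun x hx => hx.1.1⟩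
    have hSclosed : IsClosed {s ∈ Set.Icc (0:ℝ) 1 | β ≤ Q₂ s} := by
      have heq : {s ∈ Set.Icc (0:ℝ) 1 | β ≤ Q₂ s} = Set.Icc 0 1 ∩ Q₂ ⁻¹' (Set.Ici β) := by
        ext x
        simp [Set.mem_sep_iff, Set.mem_preimage, Set.mem_Ici]
      rw [heq]
      exact hQ2c.preimage_isClosed_of_isClosed isClosed_Icc isClosed_Ici
    have hτS : sInf {s ∈ Set.Icc (0:ℝ) 1 | β ≤ Q₂ s} ∈ {s ∈ Set.Icc (0:ℝ) 1 | β ≤ Q₂ s} :=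
      hSclosed.csInf_mem hS hSbdd
    have hτval : sInf ({s ∈ Set.Icc (0:ℝ) 1 | β ≤ Q₂ s} ∪ {1})
        = sInf {s ∈ Set.Icc (0:ℝ) 1 | β ≤ Q₂ s} := by
      rw [csInf_union hSbdd hS bddBelow_singleton (Set.singleton_nonempty 1), csInf_singleton]
      exact min_eq_left hτS.1.2
    rw [hτval] at hτ
    set τ : ℝ := sInf {s ∈ Set.Icc (0:ℝ) 1 | β ≤ Q₂ s} with hτdef
    have hτmem : τ ∈ Set.Icc (0:ℝ) 1 := hτS.1
    have hQ2τ : β ≤ Q₂ τ := hτS.2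
    have hτpos : 0 < τ := by
      rcases eq_or_lt_of_le hτmem.1 with h | h
      · exfalso
        rw [← h, hQ20] at hQ2τ
        linarith
      · exact h
    have htpos : 0 < t := lt_of_lt_of_le hτpos hτ
    have ht01 : t ∈ Set.Icc (0:ℝ) 1 := ⟨htpos.le, ht1.le⟩
    have htIoc : t ∈ Set.Ioc (0:ℝ) 1 := ⟨htpos, ht1.le⟩
    have hq2t : β ≤ Q₂ t := le_trans hQ2τ (hQ2m hτmem ht01 hτ)
    -- derivative of Q₂
    have hd1 := hder t htIoc
    have hQ2eq : ∀ u ∈ Set.Icc (0:ℝ) 1, Q₂ u = u - Q₁ u := fun u hu => by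
      have := hsum u hu
      linarith
    have hd2 : HasDerivWithinAt Q₂
        (1 - Phi ((δ * Q₁ t * Q₂ t + Q₂ t * W₁ (Q₁ t) ω - Q₁ t * W₂ (Q₂ t) ω) /
          Real.sqrt (t * Q₁ t * Q₂ t))) (Set.Icc 0 1) t := by
      have hid : HasDerivWithinAt (fun u : ℝ => u) 1 (Set.Icc 0 1) t := hasDerivWithinAt_id t _
      exact (hid.sub hd1).congr hQ2eq (hQ2eq t ht01)
    have hdw : derivWithin Q₂ (Set.Icc 0 1) t
        = 1 - Phi ((δ * Q₁ t * Q₂ t + Q₂ t * W₁ (Q₁ t) ω - Q₁ t * W₂ (Q₂ t) ω) /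
          Real.sqrt (t * Q₁ t * Q₂ t)) :=
      hd2.derivWithin (uniqueDiffOn_Icc_zero_one t ht01)
    have hv1 : 2 * β ≤ 1 := by linarith
    have hvmem : 2 * β ∈ Set.Icc (0:ℝ) 1 := ⟨by positivity, hv1⟩
    by_cases hcase : t < 2 * β
    · -- Q₂ is constant β on [t, 2β]
      have hQ2v : Q₂ (2 * β) ≤ β := by
        have := hsum (2 * β) hvmem
        linarith
      have hconst : ∀ u ∈ Set.Icc t (2 * β), Q₂ u = β := by
        intro u hu
        have hu01 : u ∈ Set.Icc (0:ℝ) 1 := ⟨le_trans htpos.le hu.1, le_trans hu.2 hv1⟩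
        have h1 : Q₂ u ≤ Q₂ (2 * β) := hQ2m hu01 hvmem hu.2
        have h2 : Q₂ t ≤ Q₂ u := hQ2m ht01 hu01 hu.1
        linarith
      have hsub : Set.Icc t (2 * β) ⊆ Set.Icc (0:ℝ) 1 := Set.Icc_subset_Icc htpos.le hv1
      have hd2' : HasDerivWithinAt Q₂
          (1 - Phi ((δ * Q₁ t * Q₂ t + Q₂ t * W₁ (Q₁ t) ω - Q₁ t * W₂ (Q₂ t) ω) /
            Real.sqrt (t * Q₁ t * Q₂ t))) (Set.Icc t (2 * β)) t := hd2.mono hsub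
      have hdc : HasDerivWithinAt Q₂ 0 (Set.Icc t (2 * β)) t :=
        (hasDerivWithinAt_const t _ β).congr hconst (hconst t ⟨le_refl t, hcase.le⟩)
      have hud : UniqueDiffWithinAt ℝ (Set.Icc t (2 * β)) t :=
        (uniqueDiffOn_Icc hcase) t (Set.left_mem_Icc.2 hcase.le)
      have hzero : 1 - Phi ((δ * Q₁ t * Q₂ t + Q₂ t * W₁ (Q₁ t) ω - Q₁ t * W₂ (Q₂ t) ω) /
          Real.sqrt (t * Q₁ t * Q₂ t)) = 0 := by
        rw [← hd2'.derivWithin hud, hdc.derivWithin hud]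
      rw [hdw, hzero]
      exact TSB_Phi_nonneg _
    · push_neg at hcase
      have hq1t : β ≤ Q₁ t := le_trans hQ1v (hQ1m hvmem ht01 hcase)
      have hq1pos : 0 < Q₁ t := lt_of_lt_of_le hβpos hq1t
      have hq2pos : 0 < Q₂ t := lt_of_lt_of_le hβpos hq2t
      have hQ1le : Q₁ t ≤ t := by have := hsum t ht01; linarith
      have hQ2le : Q₂ t ≤ t := by have := hsum t ht01; linarith
      have hQ1le1 : Q₁ t ≤ 1 := le_trans hQ1le ht1.le
      have hQ2le1 : Q₂ t ≤ 1 := le_trans hQ2le ht1.le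
      -- square roots
      set st : ℝ := Real.sqrt t with hstdef
      set s1 : ℝ := Real.sqrt (Q₁ t) with hs1def
      set s2 : ℝ := Real.sqrt (Q₂ t) with hs2def
      have hstpos : 0 < st := Real.sqrt_pos.2 htpos
      have hs1pos : 0 < s1 := Real.sqrt_pos.2 hq1pos
      have hs2pos : 0 < s2 := Real.sqrt_pos.2 hq2pos
      have hst2 : st * st = t := Real.mul_self_sqrt htpos.le
      have hs12 : s1 * s1 = Q₁ t := Real.mul_self_sqrt hq1pos.le
      have hs22 : s2 * s2 = Q₂ t := Real.mul_self_sqrt hq2pos.le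
      have hR : Real.sqrt (t * Q₁ t * Q₂ t) = st * s1 * s2 := by
        rw [Real.sqrt_mul (by positivity), Real.sqrt_mul htpos.le]
      have hRpos : 0 < Real.sqrt (t * Q₁ t * Q₂ t) := by
        rw [hR]; positivity
      have hdivsqrt : Real.sqrt (Q₁ t / t) = s1 / st := Real.sqrt_div hq1pos.le t
      have hs1st : s1 ≤ st := Real.sqrt_le_sqrt hQ1le
      have hs2st : s2 ≤ st := Real.sqrt_le_sqrt hQ2le
      -- noise bounds
      have hw1 : |W₁ (Q₁ t) ω| ≤ A * Real.sqrt Kα * Real.sqrt LL * s1 := hn1 _ hq1t hQ1le1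
      have hw2 : |W₂ (Q₂ t) ω| ≤ A * Real.sqrt Kα * Real.sqrt LL * s2 := hn2 _ hq2t hQ2le1
      have hnoise : Q₂ t * |W₁ (Q₁ t) ω| + Q₁ t * |W₂ (Q₂ t) ω|
          ≤ C * Real.sqrt LL * (st * s1 * s2) := by
        have h1 : Q₂ t * |W₁ (Q₁ t) ω| ≤ A * Real.sqrt Kα * Real.sqrt LL * (st * s1 * s2) := by
          calc Q₂ t * |W₁ (Q₁ t) ω| ≤ Q₂ t * (A * Real.sqrt Kα * Real.sqrt LL * s1) :=
                mul_le_mul_of_nonneg_left hw1 hq2pos.le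
            _ = (A * Real.sqrt Kα * Real.sqrt LL) * (s2 * s2 * s1) := by rw [← hs22]; ring
            _ ≤ (A * Real.sqrt Kα * Real.sqrt LL) * (st * s1 * s2) := by
                apply mul_le_mul_of_nonneg_left _ (by positivity)
                calc s2 * s2 * s1 ≤ st * s2 * s1 :=
                      mul_le_mul_of_nonneg_right
                        (mul_le_mul_of_nonneg_right hs2st hs2pos.le) hs1pos.le
                  _ = st * s1 * s2 := by ring
            _ = A * Real.sqrt Kα * Real.sqrt LL * (st * s1 * s2) := rfl
        have h2 : Q₁ t * |W₂ (Q₂ t) ω| ≤ A * Real.sqrt Kα * Real.sqrt LL * (st * s1 * s2) := by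
          calc Q₁ t * |W₂ (Q₂ t) ω| ≤ Q₁ t * (A * Real.sqrt Kα * Real.sqrt LL * s2) :=
                mul_le_mul_of_nonneg_left hw2 hq1pos.le
            _ = (A * Real.sqrt Kα * Real.sqrt LL) * (s1 * s1 * s2) := by rw [← hs12]; ring
            _ ≤ (A * Real.sqrt Kα * Real.sqrt LL) * (st * s1 * s2) := by
                apply mul_le_mul_of_nonneg_left _ (by positivity)
                exact mul_le_mul_of_nonneg_right
                  (mul_le_mul_of_nonneg_right hs1st hs1pos.le) hs2pos.le
        have h3 : 2 * (A * Real.sqrt Kα * Real.sqrt LL) * (st * s1 * s2)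
            ≤ C * Real.sqrt LL * (st * s1 * s2) := by
          apply mul_le_mul_of_nonneg_right _ (by positivity)
          rw [hCdef]
          linarith [hsqrtLL]
        linarith
      -- the argument inequality
      have hprod : Real.sqrt (Q₁ t / t) * s2 * Real.sqrt (t * Q₁ t * Q₂ t) = Q₁ t * Q₂ t := by
        rw [hdivsqrt, hR, ← hs12, ← hs22]
        field_simp
      have harg : -((δ * Q₁ t * Q₂ t + Q₂ t * W₁ (Q₁ t) ω - Q₁ t * W₂ (Q₂ t) ω) /
            Real.sqrt (t * Q₁ t * Q₂ t))
          ≤ -(Real.sqrt (Q₁ t / t)) * s2 * δ + C * Real.sqrt LL := by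
        rw [← neg_div, div_le_iff₀ hRpos]
        have e1 : Real.sqrt (Q₁ t / t) * s2 * (st * s1 * s2) = Q₁ t * Q₂ t := by
          rw [← hR]
          exact hprod
        have hexpand : (-(Real.sqrt (Q₁ t / t)) * s2 * δ + C * Real.sqrt LL)
            * Real.sqrt (t * Q₁ t * Q₂ t)
            = -(δ * Q₁ t * Q₂ t) + C * Real.sqrt LL * (st * s1 * s2) := by
          calc (-(Real.sqrt (Q₁ t / t)) * s2 * δ + C * Real.sqrt LL)
              * Real.sqrt (t * Q₁ t * Q₂ t)
              = -(δ * (Real.sqrt (Q₁ t / t) * s2 * (st * s1 * s2)))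
                + C * Real.sqrt LL * (st * s1 * s2) := by rw [hR]; ring
            _ = -(δ * Q₁ t * Q₂ t) + C * Real.sqrt LL * (st * s1 * s2) := by rw [e1]; ring
        rw [hexpand]
        have hb1' : Q₂ t * -|W₁ (Q₁ t) ω| ≤ Q₂ t * W₁ (Q₁ t) ω :=
          mul_le_mul_of_nonneg_left (neg_abs_le _) hq2pos.le
        have hb2' : Q₁ t * W₂ (Q₂ t) ω ≤ Q₁ t * |W₂ (Q₂ t) ω| :=
          mul_le_mul_of_nonneg_left (le_abs_self _) hq1pos.le
        linarith [hnoise, hb1', hb2']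
      -- conclude
      have hcompl : 1 - Phi ((δ * Q₁ t * Q₂ t + Q₂ t * W₁ (Q₁ t) ω - Q₁ t * W₂ (Q₂ t) ω) /
            Real.sqrt (t * Q₁ t * Q₂ t))
          = Phi (-((δ * Q₁ t * Q₂ t + Q₂ t * W₁ (Q₁ t) ω - Q₁ t * W₂ (Q₂ t) ω) /
            Real.sqrt (t * Q₁ t * Q₂ t))) := by
        have := TSB_Phi_add_neg ((δ * Q₁ t * Q₂ t + Q₂ t * W₁ (Q₁ t) ω - Q₁ t * W₂ (Q₂ t) ω) /
            Real.sqrt (t * Q₁ t * Q₂ t))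
        linarith
      rw [hdw, hcompl]
      exact TSB_Phi_mono harg
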